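/- Fix $r \in (0,1)$, $s = \sqrt{1-r^2}$. For the loop $x_t = (r\cos t, r\sin t, 0, s, 0, 0, 0, 0)$ on $S^7$, let $Z_0 = (-r^3 s, 0, 0, r^4, r^3 s, 0, 0, r^2 s^2)$. Then the solution of the parallel transport ODE $\frac{dZ_t}{dt} = -\langle \dot{x}_t, Z_t\rangle x_t$ with initial value $Z_0$ satisfies: the fifth coordinate of $Z_t$ is constantly $r^3 s$, and the fourth coordinate of $Z_t$ equals $r^4 \cos(st)$; in particular the fourth coordinate of $Z_{2\pi}$ is $r^4\cos(2\pi s) \neq r^4$. -/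

import Mathlib

open Real

private lemma const_of_hasDerivAt_zero {f : ℝ → ℝ} (h : ∀ t, HasDerivAt f 0 t) (t : ℝ) :
    f t = f 0 :=
  is_const_of_deriv_eq_zero (fun u => (h u).differentiableAt) (fun u => (h u).deriv) t 0

/-- Along the loop `x_t = (r cos t, r sin t, 0, s, 0, 0, 0, 0)` on `S⁷`, the parallel
transport `Z` of `Z₀ = (-r³s, 0, 0, r⁴, r³s, 0, 0, r²s²)` has constant fifth coordinate
`r³s`, fourth coordinate `r⁴ cos(st)`, and in particular the fourth coordinate of
`Z(2π)` is `r⁴ cos(2πs) ≠ r⁴`. -/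
theorem stmt_19 (r : ℝ) (hr : r ∈ Set.Ioo (0 : ℝ) 1) (s : ℝ)
    (hs : s = Real.sqrt (1 - r ^ 2))
    (x : ℝ → (Fin 8 → ℝ))
    (hx : x = fun t => ![r * Real.cos t, r * Real.sin t, 0, s, 0, 0, 0, 0])
    (Z : ℝ → (Fin 8 → ℝ))
    (hode : ∀ t, HasDerivAt Z (-(∑ i, deriv x t i * Z t i) • x t) t)
    (hinit : Z 0 = ![-(r ^ 3 * s), 0, 0, r ^ 4, r ^ 3 * s, 0, 0, r ^ 2 * s ^ 2]) :
    (∀ t, Z t 4 = r ^ 3 * s) ∧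
    (∀ t, Z t 3 = r ^ 4 * Real.cos (s * t)) ∧
    Z (2 * π) 3 = r ^ 4 * Real.cos (2 * π * s) ∧
    Z (2 * π) 3 ≠ r ^ 4 := by
  obtain ⟨hr0, hr1⟩ := hr
  have h1r : 0 < 1 - r ^ 2 := by nlinarith
  have hs2 : s ^ 2 = 1 - r ^ 2 := by rw [hs]; exact Real.sq_sqrt h1r.le
  have hs0 : 0 < s := by rw [hs]; exact Real.sqrt_pos.2 h1r
  have hs1 : s < 1 := by nlinarith
  -- derivative of x
  have hxd : ∀ t, deriv x t = ![-(r * Real.sin t), r * Real.cos t, 0, 0, 0, 0, 0, 0] := by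
    intro t
    have hdx : HasDerivAt x (![-(r * Real.sin t), r * Real.cos t, 0, 0, 0, 0, 0, 0]) t := by
      rw [hx, hasDerivAt_pi]
      intro i
      fin_cases i <;> simp only [Matrix.cons_val_zero, Matrix.cons_val_one, Matrix.head_cons,
        Matrix.cons_val_two, Matrix.tail_cons, Matrix.cons_val_three, Matrix.cons_val_four,
        Matrix.cons_val_fin_one, Fin.isValue]
      · simpa [mul_comm] using ((Real.hasDerivAt_cos t).const_mul r)
      · simpa [mul_comm] using ((Real.hasDerivAt_sin t).const_mul r)
      · exact hasDerivAt_const t 0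
      · exact hasDerivAt_const t s
      · exact hasDerivAt_const t 0
      · exact hasDerivAt_const t 0
      · exact hasDerivAt_const t 0
      · exact hasDerivAt_const t 0
    exact hdx.deriv
  set f : ℝ → ℝ := fun t => -(r * Real.sin t) * Z t 0 + (r * Real.cos t) * Z t 1 with hfdef
  have hsum : ∀ t, (∑ i, deriv x t i * Z t i) = f t := by
    intro t
    rw [Fin.sum_univ_eight, hxd t, hfdef]
    show -(r * Real.sin t) * Z t 0 + r * Real.cos t * Z t 1 + 0 * Z t 2 + 0 * Z t 3 +
      0 * Z t 4 + 0 * Z t 5 + 0 * Z t 6 + 0 * Z t 7 = _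
    ring
  have hZc : ∀ t i, HasDerivAt (fun u => Z u i) (-(f t) * x t i) t := by
    intro t i
    have h2 := hasDerivAt_pi.1 (hode t) i
    simpa [hsum t] using h2
  have hx0 : ∀ t, x t 0 = r * Real.cos t := by intro t; rw [hx]; simp
  have hx1 : ∀ t, x t 1 = r * Real.sin t := by intro t; rw [hx]; simp
  have hx3 : ∀ t, x t 3 = s := by intro t; rw [hx]; simp
  have hx4 : ∀ t, x t 4 = 0 := by intro t; rw [hx]; simp
  -- coordinate 4 is constant
  have hZ4 : ∀ t, HasDerivAt (fun u => Z u 4) 0 t := by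
    intro t
    simpa [hx4 t] using hZc t 4
  have part1 : ∀ t, Z t 4 = r ^ 3 * s := by
    intro t
    have := const_of_hasDerivAt_zero hZ4 t
    rw [this, hinit]
    simp
  -- the function g and the second-order system
  set g : ℝ → ℝ := fun t => (r * Real.cos t) * Z t 0 + (r * Real.sin t) * Z t 1 with hgdef
  have hf' : ∀ t, HasDerivAt f (-(g t)) t := by
    intro t
    have h1 : HasDerivAt (fun u => -(r * Real.sin u)) (-(r * Real.cos t)) t := by
      exact ((Real.hasDerivAt_sin t).const_mul r).neg
    have h2 : HasDerivAt (fun u => r * Real.cos u) (-(r * Real.sin t)) t := by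
      simpa [mul_comm] using ((Real.hasDerivAt_cos t).const_mul r)
    have hZ0 := hZc t 0
    have hZ1 := hZc t 1
    rw [hx0 t] at hZ0
    rw [hx1 t] at hZ1
    have h := (h1.mul hZ0).add (h2.mul hZ1)
    rw [hfdef]
    refine h.congr_deriv (Eq.symm ?_)
    rw [hgdef]
    ring
  have hg' : ∀ t, HasDerivAt g (s ^ 2 * f t) t := by
    intro t
    have h1 : HasDerivAt (fun u => r * Real.cos u) (-(r * Real.sin t)) t := by
      simpa [mul_comm] using ((Real.hasDerivAt_cos t).const_mul r)
    have h2 : HasDerivAt (fun u => r * Real.sin u) (r * Real.cos t) t := by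
      simpa [mul_comm] using ((Real.hasDerivAt_sin t).const_mul r)
    have hZ0 := hZc t 0
    have hZ1 := hZc t 1
    rw [hx0 t] at hZ0
    rw [hx1 t] at hZ1
    have h := (h1.mul hZ0).add (h2.mul hZ1)
    rw [hgdef]
    refine h.congr_deriv (Eq.symm ?_)
    have hc2 : Real.cos t ^ 2 + Real.sin t ^ 2 = 1 := by
      rw [add_comm]; exact Real.sin_sq_add_cos_sq t
    linear_combination (f t) * hs2 + (r ^ 2 * f t) * hc2
  -- energy argument
  set φ : ℝ → ℝ := fun t => f t - r ^ 4 * Real.sin (s * t) with hφdef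
  set ψ : ℝ → ℝ := fun t => g t + r ^ 4 * s * Real.cos (s * t) with hψdef
  have hsin : ∀ t, HasDerivAt (fun u => Real.sin (s * u)) (s * Real.cos (s * t)) t := by
    intro t
    have := (Real.hasDerivAt_sin (s * t)).comp t ((hasDerivAt_id t).const_mul s)
    simpa [mul_comm, Function.comp_def] using this
  have hcos : ∀ t, HasDerivAt (fun u => Real.cos (s * u)) (-(s * Real.sin (s * t))) t := by
    intro t
    have := (Real.hasDerivAt_cos (s * t)).comp t ((hasDerivAt_id t).const_mul s)
    simpa [mul_comm, Function.comp_def] using this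
  have hφ' : ∀ t, HasDerivAt φ (-(ψ t)) t := by
    intro t
    have h := (hf' t).sub ((hsin t).const_mul (r ^ 4))
    rw [hφdef]
    refine h.congr_deriv (Eq.symm ?_)
    rw [hψdef]
    ring
  have hψ' : ∀ t, HasDerivAt ψ (s ^ 2 * φ t) t := by
    intro t
    have h := (hg' t).add ((hcos t).const_mul (r ^ 4 * s))
    rw [hψdef]
    refine h.congr_deriv (Eq.symm ?_)
    rw [hφdef]
    ring
  set E : ℝ → ℝ := fun t => s ^ 2 * φ t ^ 2 + ψ t ^ 2 with hEdef
  have hE' : ∀ t, HasDerivAt E 0 t := by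
    intro t
    have h := (((hφ' t).pow 2).const_mul (s ^ 2)).add ((hψ' t).pow 2)
    rw [hEdef]
    refine h.congr_deriv (Eq.symm ?_)
    push_cast
    ring
  have hφ0 : φ 0 = 0 := by
    rw [hφdef, hfdef]
    simp [hinit]
  have hψ0 : ψ 0 = 0 := by
    rw [hψdef, hgdef]
    simp [hinit]
    ring
  have hE0 : ∀ t, E t = 0 := by
    intro t
    have := const_of_hasDerivAt_zero hE' t
    rw [this, hEdef]
    simp [hφ0, hψ0]
  have hfeq : ∀ t, f t = r ^ 4 * Real.sin (s * t) := by
    intro t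
    have hE := hE0 t
    rw [hEdef] at hE
    simp only [] at hE
    have hsq : φ t ^ 2 = 0 := by nlinarith [sq_nonneg (φ t), sq_nonneg (ψ t), mul_pos hs0 hs0]
    have hφt : φ t = 0 := by
      have := sq_eq_zero_iff.1 hsq
      exact this
    have h2 := hφt
    rw [hφdef] at h2
    simp only [] at h2
    linarith
  -- coordinate 3
  have hu : ∀ t, HasDerivAt (fun u => Z u 3 - r ^ 4 * Real.cos (s * u)) 0 t := by
    intro t
    have hZ3 := hZc t 3
    rw [hx3 t] at hZ3
    have h := hZ3.sub ((hcos t).const_mul (r ^ 4))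
    refine h.congr_deriv (Eq.symm ?_)
    rw [hfeq t]
    ring
  have part2 : ∀ t, Z t 3 = r ^ 4 * Real.cos (s * t) := by
    intro t
    have := const_of_hasDerivAt_zero hu t
    simp [hinit] at this
    linarith [this]
  refine ⟨part1, part2, ?_, ?_⟩
  · rw [part2 (2 * π), mul_comm s (2 * π)]
  · rw [part2 (2 * π), mul_comm s (2 * π)]
    intro hcontra
    have hr4 : r ^ 4 ≠ 0 := by positivity
    have hcos1 : Real.cos (2 * π * s) = 1 :=
      mul_left_cancel₀ hr4 (by rw [mul_one]; exact hcontra)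
    rw [Real.cos_eq_one_iff] at hcos1
    obtain ⟨n, hn⟩ := hcos1
    have hπ : (0:ℝ) < π := Real.pi_pos
    have hns : (n : ℝ) = s := by
      have : (n : ℝ) * (2 * π) = s * (2 * π) := by linarith [hn]
      exact mul_right_cancel₀ (by positivity) this
    have hn0 : (0:ℤ) < n := by exact_mod_cast hns ▸ hs0
    have hn1 : (n:ℝ) < 1 := by rw [hns]; exact hs1
    have : (1:ℝ) ≤ (n:ℝ) := by exact_mod_cast hn0
    linarith
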